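/- For all real r, t ≥ 0, the ratio (cosh(r) - 1)/(cosh(r+t) - 1) is at least e^{-t}(1 - 2e^{-r}). -/
import Mathlib

open Real

/-- For all reals `r, t ≥ 0`, `(cosh r - 1)/(cosh (r+t) - 1) ≥ e^{-t} (1 - 2 e^{-r})`. -/
theorem cosh_ratio_ge (r t : ℝ) (hr : 0 ≤ r) (ht : 0 ≤ t) :
    (Real.cosh r - 1) / (Real.cosh (r + t) - 1) ≥ Real.exp (-t) * (1 - 2 * Real.exp (-r)) := by
  rcases le_or_gt (1 - 2 * Real.exp (-r)) 0 with h | h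
  · have h1 : Real.exp (-t) * (1 - 2 * Real.exp (-r)) ≤ 0 :=
      mul_nonpos_of_nonneg_of_nonpos (Real.exp_pos _).le h
    refine le_trans h1 (div_nonneg ?_ ?_) <;>
      linarith [Real.one_le_cosh r, Real.one_le_cosh (r + t)]
  · have hrpos : 0 < r := by
      by_contra hc
      push_neg at hc
      have hr0 : r = 0 := le_antisymm hc hr
      rw [hr0] at h
      simp at h
    have hrt : r + t ≠ 0 := by positivity
    have hd : 0 < Real.cosh (r + t) - 1 := by
      have := Real.one_lt_cosh.mpr hrt
      linarith
    rw [ge_iff_le, le_div_iff₀ hd]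
    have e1 : Real.exp (-t) * Real.exp (r + t) = Real.exp r := by
      rw [← Real.exp_add]; ring_nf
    have e2 : Real.exp (-r) * Real.exp r = 1 := by
      rw [← Real.exp_add]; simp
    have e3 : Real.exp (-t) * Real.exp (-(r + t)) ≤ Real.exp (-r) := by
      rw [← Real.exp_add]
      exact Real.exp_le_exp.mpr (by linarith)
    have c1 := Real.cosh_eq r
    have c2 := Real.cosh_eq (r + t)
    nlinarith [Real.exp_pos (-t), Real.exp_pos (-(r + t)), Real.exp_pos (-r),
      mul_pos (Real.exp_pos (-t)) h, mul_nonneg (Real.exp_pos (-(r + t))).le h.le,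
      mul_le_mul_of_nonneg_right e3 h.le]
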